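/- (Division algorithm in ℤ[j].) For all a, b ∈ ℤ[j] with η⁺(b) ≠ 0, there exist γ, ρ ∈ ℤ[j] such that a = γ·b + ρ and η⁺(ρ) < η⁺(b). -/

import Mathlib

lemma round_bound_Zj (p n : ℤ) (hn : n ≠ 0) :
    2 * |p - round ((p : ℚ) / n) * n| ≤ |n| := by
  have h := abs_sub_round ((p : ℚ) / n)
  have hnQ : (n : ℚ) ≠ 0 := Int.cast_ne_zero.mpr hn
  have h1 : |(p : ℚ) - round ((p : ℚ) / n) * n| ≤ |(n : ℚ)| / 2 := by
    calc |(p : ℚ) - round ((p : ℚ) / n) * n|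
        = |(p : ℚ) / n - round ((p : ℚ) / n)| * |(n : ℚ)| := by
          rw [← abs_mul]; congr 1; field_simp
      _ ≤ 1 / 2 * |(n : ℚ)| :=
          mul_le_mul_of_nonneg_right h (abs_nonneg _)
      _ = |(n : ℚ)| / 2 := by ring
  have h2 : (2 : ℚ) * |(p : ℚ) - (round ((p : ℚ) / n) : ℚ) * n| ≤ |(n : ℚ)| := by
    linarith
  exact_mod_cast h2

/-- Division algorithm in ℤ[j] (= ℤ√1): for all `a b` with `η⁺(b) = |norm b| ≠ 0`,
there exist `γ ρ` with `a = γ * b + ρ` and `η⁺(ρ) < η⁺(b)`. -/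
theorem division_algorithm_Zj (a b : ℤ√1) (hb : |Zsqrtd.norm b| ≠ 0) :
    ∃ γ ρ : ℤ√1, a = γ * b + ρ ∧ |Zsqrtd.norm ρ| < |Zsqrtd.norm b| := by
  set n := b.norm with hn
  have hn0 : n ≠ 0 := fun h => hb (by rw [h, abs_zero])
  set c := a * star b with hc
  set γ : ℤ√1 := ⟨round ((c.re : ℚ) / n), round ((c.im : ℚ) / n)⟩ with hγ
  set ρ := a - γ * b with hρ
  refine ⟨γ, ρ, by rw [hρ]; ring, ?_⟩
  set A := c.re - γ.re * n with hA
  set B := c.im - γ.im * n with hB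
  have hAb : 2 * |A| ≤ |n| := round_bound_Zj c.re n hn0
  have hBb : 2 * |B| ≤ |n| := round_bound_Zj c.im n hn0
  have key : ρ * star b = ⟨A, B⟩ := by
    have h1 : b * star b = (n : ℤ√1) := (Zsqrtd.norm_eq_mul_conj b).symm
    have h2 : ρ * star b = c - γ * (n : ℤ√1) := by
      rw [hρ, hc, ← h1]; ring
    rw [h2]
    ext <;> simp [hA, hB, Zsqrtd.re_mul, Zsqrtd.im_mul] <;> first | ring | rfl
  have hns : Zsqrtd.norm (star b) = n := by
    simp [Zsqrtd.norm_def, Zsqrtd.re_star, Zsqrtd.im_star, hn]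
  have hnorm : ρ.norm * n = A * A - B * B := by
    have := Zsqrtd.norm_mul ρ (star b)
    rw [hns, key] at this
    rw [← this, Zsqrtd.norm_def]; ring
  have habs : 4 * (|ρ.norm| * |n|) ≤ n * n := by
    have h4 : |ρ.norm * n| = |A * A - B * B| := by rw [hnorm]
    rw [abs_mul] at h4
    have hA2 : 4 * (A * A) ≤ n * n := by nlinarith [abs_nonneg A, abs_nonneg n, sq_abs A, sq_abs n]
    have hB2 : 4 * (B * B) ≤ n * n := by nlinarith [abs_nonneg B, abs_nonneg n, sq_abs B, sq_abs n]
    have : 4 * |A * A - B * B| ≤ n * n := by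
      have hAnn : 0 ≤ A * A := mul_self_nonneg A
      have hBnn : 0 ≤ B * B := mul_self_nonneg B
      rcases abs_cases (A * A - B * B) with h | h <;> rw [h.1] <;> linarith
    rw [h4]
    linarith
  have hnpos : 0 < |n| := abs_pos.mpr hn0
  nlinarith [abs_nonneg ρ.norm, sq_abs n]
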